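/- If V' is an ICS of a finite graph G = (V,E) with |V'| = k, then at most k vertices v ∈ V satisfy |N⁺(v) ∩ V'| = 1, and every vertex satisfies |N⁺(v) ∩ V'| ≥ 1; hence Σ_{v∈V} |N⁺(v) ∩ V'| ≥ k + 2(|V| − k). -/
import Mathlib


variable {V : Type*} [Fintype V] [DecidableEq V]

/-- Closed neighborhood `N⁺(v)` of a vertex, as a finset. -/
def closedNbhd (G : SimpleGraph V) [DecidableRel G.Adj] (v : V) : Finset V :=
  Finset.univ.filter fun u => u = v ∨ G.Adj v u

/-- `V'` is an Identifying Code Set of `G`: all closed-neighborhood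
signatures `N⁺(v) ∩ V'` are pairwise distinct. -/
def IsICS (G : SimpleGraph V) [DecidableRel G.Adj] (V' : Finset V) : Prop :=
  ∀ v w : V, v ≠ w → closedNbhd G v ∩ V' ≠ closedNbhd G w ∩ V'

/-- If V' is an ICS of G which is also dominating (every signature is
nonempty), then at most |V'| vertices have singleton signature, every vertex
has signature of size at least 1, and the total signature size is at least
k + 2(|V| − k) where k = |V'|. -/
theorem ics_signature_sum_lower_bound (G : SimpleGraph V) [DecidableRel G.Adj]
    (V' : Finset V) (h : IsICS G V')
    (hdom : ∀ v : V, 1 ≤ (closedNbhd G v ∩ V').card) :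
    (Finset.univ.filter fun v : V => (closedNbhd G v ∩ V').card = 1).card ≤ V'.card ∧
    V'.card + 2 * (Fintype.card V - V'.card) ≤
      ∑ v : V, (closedNbhd G v ∩ V').card := by
  set S := Finset.univ.filter fun v : V => (closedNbhd G v ∩ V').card = 1 with hS
  have hmem : ∀ v : V, (Finset.card_pos.mp (hdom v)).choose ∈ closedNbhd G v ∩ V' :=
    fun v => (Finset.card_pos.mp (hdom v)).choose_spec
  have hsig : ∀ v ∈ S, closedNbhd G v ∩ V' =
      {(Finset.card_pos.mp (hdom v)).choose} := by
    intro v hv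
    have hc : (closedNbhd G v ∩ V').card = 1 := (Finset.mem_filter.mp hv).2
    exact Finset.eq_singleton_iff_unique_mem.mpr ⟨hmem v,
      fun y hy => Finset.card_le_one.mp (le_of_eq hc) y hy _ (hmem v)⟩
  have hSk : S.card ≤ V'.card := by
    apply Finset.card_le_card_of_injOn
      (fun v => (Finset.card_pos.mp (hdom v)).choose)
    · intro v hv
      exact (Finset.mem_inter.mp (hmem v)).2
    · intro v hv w hw heq
      by_contra hne
      apply h v w hne
      rw [hsig v hv, hsig w hw]
      simpa using heq
  refine ⟨hSk, ?_⟩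
  have hterm : ∀ v : V, (if v ∈ S then 1 else 2) ≤ (closedNbhd G v ∩ V').card := by
    intro v
    by_cases hv : v ∈ S
    · simp [hv, hdom v]
    · simp only [hv, if_false]
      have h1 := hdom v
      have hne : (closedNbhd G v ∩ V').card ≠ 1 := by
        intro hc
        exact hv (Finset.mem_filter.mpr ⟨Finset.mem_univ v, hc⟩)
      omega
  have hsum : ∑ v : V, (if v ∈ S then 1 else 2) ≤ ∑ v : V, (closedNbhd G v ∩ V').card :=
    Finset.sum_le_sum fun v _ => hterm v
  have hkV : V'.card ≤ Fintype.card V := Finset.card_le_univ V'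
  have hSV : S.card ≤ Fintype.card V := Finset.card_le_univ S
  have hval : (∑ v : V, (if v ∈ S then 1 else 2)) =
      S.card + 2 * (Fintype.card V - S.card) := by
    rw [Finset.sum_ite, Finset.sum_const, Finset.sum_const, smul_eq_mul, smul_eq_mul,
      mul_one]
    have h1 : Finset.univ.filter (fun v => v ∈ S) = S := by
      ext x; simp
    have h2 : (Finset.univ.filter (fun v => ¬ v ∈ S)).card = Fintype.card V - S.card := by
      rw [Finset.filter_not, Finset.card_sdiff_of_subset (Finset.filter_subset _ _), h1,
        Finset.card_univ]
    rw [h1, h2]; ring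
  omega
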